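/- Let h ∈ K̄[z] be nonzero with two part-p-th-power decompositions h = q^p + ρ = q₁^p + ρ₁, where v is the Gauss valuation, 0 ≤ v(ρ) − v(h) < p·v(p)/(p−1), and v(ρ₁) > v(ρ). Then v(q₁ − q) = v(ρ)/p, i.e. v((q₁ − q)^p) = v(ρ). -/

import Mathlib

open Polynomial
open scoped Classical

/-- An additive ℚ-valued valuation on a field `K`, recorded as a bare function with
the valuation axioms imposed only at nonzero elements (the value at `0` is junk). -/
structure AddVal (K : Type*) [Field K] where
  v : K → ℚ
  map_one : v 1 = 0
  map_mul : ∀ x y : K, x ≠ 0 → y ≠ 0 → v (x * y) = v x + v y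
  add_ge : ∀ x y : K, x ≠ 0 → y ≠ 0 → x + y ≠ 0 → min (v x) (v y) ≤ v (x + y)

variable {K : Type*} [Field K]

/-- The Gauss valuation of a polynomial: the minimum of the valuations of its
(nonzero) coefficients, with junk value `0` at the zero polynomial. -/
noncomputable def AddVal.gauss (w : AddVal K) (h : K[X]) : ℚ :=
  if hh : h = 0 then 0
  else h.support.inf' (Polynomial.support_nonempty.mpr hh) fun i => w.v (h.coeff i)

section Generic

variable {R : Type*} {ι : Type*} [Ring R] (v : R → ℚ)

theorem gen_add_eq
    (hadd : ∀ x y : R, x ≠ 0 → y ≠ 0 → x + y ≠ 0 → min (v x) (v y) ≤ v (x + y))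
    (hneg : ∀ x : R, x ≠ 0 → v (-x) = v x)
    {x y : R} (hx : x ≠ 0) (hy : y ≠ 0) (hlt : v x < v y) :
    x + y ≠ 0 ∧ v (x + y) = v x := by
  have hxy : x + y ≠ 0 := by
    intro h0
    have : x = -y := eq_neg_of_add_eq_zero_left h0
    rw [this, hneg y hy] at hlt
    exact lt_irrefl _ hlt
  refine ⟨hxy, le_antisymm ?_ ?_⟩
  · have hx' : x = (x + y) + (-y) := by abel
    have h2 := hadd (x + y) (-y) hxy (neg_ne_zero.mpr hy) (by rw [← hx']; exact hx)
    rw [← hx', hneg y hy] at h2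
    by_contra hcon
    push_neg at hcon
    exact absurd h2 (not_le.mpr (lt_min hcon hlt))
  · exact le_trans (le_min le_rfl hlt.le) (hadd x y hx hy hxy)

theorem gen_sum_ge
    (hadd : ∀ x y : R, x ≠ 0 → y ≠ 0 → x + y ≠ 0 → min (v x) (v y) ≤ v (x + y))
    {s : Finset ι} {f : ι → R} {c : ℚ}
    (hf : ∀ i ∈ s, f i ≠ 0 → c ≤ v (f i)) (hs : ∑ i ∈ s, f i ≠ 0) :
    c ≤ v (∑ i ∈ s, f i) := by
  classical
  induction s using Finset.cons_induction with
  | empty => simp at hs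
  | cons a s ha ih =>
    rw [Finset.sum_cons] at hs ⊢
    by_cases h0 : f a = 0
    · rw [h0, zero_add] at hs ⊢
      exact ih (fun i hi => hf i (Finset.mem_cons_of_mem hi)) hs
    by_cases h1 : ∑ i ∈ s, f i = 0
    · rw [h1, add_zero] at hs ⊢
      exact hf a (Finset.mem_cons_self _ _) h0
    have hmin := hadd _ _ h0 h1 hs
    have hc1 : c ≤ v (f a) := hf a (Finset.mem_cons_self _ _) h0
    have hc2 : c ≤ v (∑ i ∈ s, f i) := ih (fun i hi => hf i (Finset.mem_cons_of_mem hi)) h1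
    exact le_trans (le_min hc1 hc2) hmin

theorem gen_sum_gt
    (hadd : ∀ x y : R, x ≠ 0 → y ≠ 0 → x + y ≠ 0 → min (v x) (v y) ≤ v (x + y))
    {s : Finset ι} {f : ι → R} {c : ℚ}
    (hf : ∀ i ∈ s, f i ≠ 0 → c < v (f i)) (hs : ∑ i ∈ s, f i ≠ 0) :
    c < v (∑ i ∈ s, f i) := by
  classical
  induction s using Finset.cons_induction with
  | empty => simp at hs
  | cons a s ha ih =>
    rw [Finset.sum_cons] at hs ⊢
    by_cases h0 : f a = 0
    · rw [h0, zero_add] at hs ⊢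
      exact ih (fun i hi => hf i (Finset.mem_cons_of_mem hi)) hs
    by_cases h1 : ∑ i ∈ s, f i = 0
    · rw [h1, add_zero] at hs ⊢
      exact hf a (Finset.mem_cons_self _ _) h0
    have hmin := hadd _ _ h0 h1 hs
    have hc1 : c < v (f a) := hf a (Finset.mem_cons_self _ _) h0
    have hc2 : c < v (∑ i ∈ s, f i) := ih (fun i hi => hf i (Finset.mem_cons_of_mem hi)) h1
    exact lt_of_lt_of_le (lt_min hc1 hc2) hmin

theorem gen_sum_strict
    (hadd : ∀ x y : R, x ≠ 0 → y ≠ 0 → x + y ≠ 0 → min (v x) (v y) ≤ v (x + y))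
    (hneg : ∀ x : R, x ≠ 0 → v (-x) = v x)
    {s : Finset ι} {f : ι → R} {i₀ : ι} (hi₀ : i₀ ∈ s) (h0 : f i₀ ≠ 0)
    (hf : ∀ i ∈ s, i ≠ i₀ → f i ≠ 0 → v (f i₀) < v (f i)) :
    (∑ i ∈ s, f i) ≠ 0 ∧ v (∑ i ∈ s, f i) = v (f i₀) := by
  classical
  rw [← Finset.add_sum_erase s f hi₀]
  by_cases h1 : ∑ i ∈ s.erase i₀, f i = 0
  · rw [h1, add_zero]; exact ⟨h0, rfl⟩
  have hgt : v (f i₀) < v (∑ i ∈ s.erase i₀, f i) :=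
    gen_sum_gt v hadd (fun i hi hne =>
      hf i (Finset.mem_of_mem_erase hi) (Finset.ne_of_mem_erase hi) hne) h1
  exact gen_add_eq v hadd hneg h0 h1 hgt

end Generic

namespace AddVal
variable (w : AddVal K)

theorem gauss_def {h : K[X]} (hh : h ≠ 0) :
    w.gauss h = h.support.inf' (Polynomial.support_nonempty.mpr hh) fun i => w.v (h.coeff i) :=
  dif_neg hh

theorem gauss_le_coeff {h : K[X]} (hh : h ≠ 0) {i : ℕ} (hi : h.coeff i ≠ 0) :
    w.gauss h ≤ w.v (h.coeff i) := by
  rw [w.gauss_def hh]; exact Finset.inf'_le _ (mem_support_iff.mpr hi)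

theorem le_gauss {h : K[X]} (hh : h ≠ 0) {c : ℚ}
    (H : ∀ i, h.coeff i ≠ 0 → c ≤ w.v (h.coeff i)) : c ≤ w.gauss h := by
  rw [w.gauss_def hh]; exact Finset.le_inf' _ _ fun i hi => H i (mem_support_iff.mp hi)

theorem exists_gauss {h : K[X]} (hh : h ≠ 0) :
    ∃ i, h.coeff i ≠ 0 ∧ w.gauss h = w.v (h.coeff i) := by
  obtain ⟨i, hi, he⟩ := Finset.exists_mem_eq_inf' (Polynomial.support_nonempty.mpr hh)
    fun i => w.v (h.coeff i)
  exact ⟨i, mem_support_iff.mp hi, by rw [w.gauss_def hh, he]⟩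

theorem v_neg {x : K} (hx : x ≠ 0) : w.v (-x) = w.v x := by
  have h1 : w.v (-1 : K) = 0 := by
    have h2 := w.map_mul (-1) (-1) (by norm_num) (by norm_num)
    rw [neg_mul_neg, one_mul, w.map_one] at h2
    linarith
  have h3 := w.map_mul (-1) x (by norm_num) hx
  rw [neg_one_mul] at h3
  rw [h3, h1, zero_add]

theorem gauss_neg {h : K[X]} (hh : h ≠ 0) : w.gauss (-h) = w.gauss h := by
  have hh' : -h ≠ 0 := neg_ne_zero.mpr hh
  refine le_antisymm ?_ ?_
  · refine w.le_gauss hh fun i hi => ?_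
    have : (-h).coeff i ≠ 0 := by simpa using hi
    calc w.gauss (-h) ≤ w.v ((-h).coeff i) := w.gauss_le_coeff hh' this
      _ = w.v (h.coeff i) := by rw [coeff_neg]; exact w.v_neg hi
  · refine w.le_gauss hh' fun i hi => ?_
    have hi' : h.coeff i ≠ 0 := by simpa using hi
    calc w.gauss h ≤ w.v (h.coeff i) := w.gauss_le_coeff hh hi'
      _ = w.v ((-h).coeff i) := by rw [coeff_neg]; exact (w.v_neg hi').symm

theorem gauss_add_ge : ∀ f g : K[X], f ≠ 0 → g ≠ 0 → f + g ≠ 0 →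
    min (w.gauss f) (w.gauss g) ≤ w.gauss (f + g) := by
  intro f g hf hg hfg
  refine w.le_gauss hfg fun i hi => ?_
  rw [coeff_add] at hi ⊢
  by_cases h1 : f.coeff i = 0
  · rw [h1, zero_add] at hi ⊢
    exact le_trans (min_le_right _ _) (w.gauss_le_coeff hg hi)
  by_cases h2 : g.coeff i = 0
  · rw [h2, add_zero] at hi ⊢
    exact le_trans (min_le_left _ _) (w.gauss_le_coeff hf h1)
  refine le_trans (le_min ?_ ?_) (w.add_ge _ _ h1 h2 hi)
  · exact le_trans (min_le_left _ _) (w.gauss_le_coeff hf h1)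
  · exact le_trans (min_le_right _ _) (w.gauss_le_coeff hg h2)

theorem gauss_C {c : K} (hc : c ≠ 0) : w.gauss (C c) = w.v c := by
  have hC : (C c : K[X]) ≠ 0 := by simpa using hc
  refine le_antisymm ?_ ?_
  · have h0 : (C c).coeff 0 ≠ 0 := by simpa using hc
    simpa using w.gauss_le_coeff hC h0
  · refine w.le_gauss hC fun i hi => ?_
    rcases Nat.eq_zero_or_pos i with h0 | h0
    · subst h0; simp
    · rw [coeff_C, if_neg (by omega)] at hi; exact absurd rfl hi

theorem gauss_mul {f g : K[X]} (hf : f ≠ 0) (hg : g ≠ 0) :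
    w.gauss (f * g) = w.gauss f + w.gauss g := by
  have hfg : f * g ≠ 0 := mul_ne_zero hf hg
  refine le_antisymm ?_ ?_
  · obtain ⟨if0, hif0, hif0'⟩ := w.exists_gauss hf
    obtain ⟨jg0, hjg0, hjg0'⟩ := w.exists_gauss hg
    set F : Finset ℕ := f.support.filter (fun i => w.v (f.coeff i) = w.gauss f) with hF
    set G : Finset ℕ := g.support.filter (fun j => w.v (g.coeff j) = w.gauss g) with hG
    have hFne : F.Nonempty :=
      ⟨if0, Finset.mem_filter.mpr ⟨mem_support_iff.mpr hif0, hif0'.symm⟩⟩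
    have hGne : G.Nonempty :=
      ⟨jg0, Finset.mem_filter.mpr ⟨mem_support_iff.mpr hjg0, hjg0'.symm⟩⟩
    set i₀ := F.min' hFne with hi₀def
    set j₀ := G.min' hGne with hj₀def
    have hi₀ : i₀ ∈ F := F.min'_mem hFne
    have hj₀ : j₀ ∈ G := G.min'_mem hGne
    have hi₀c : f.coeff i₀ ≠ 0 := mem_support_iff.mp (Finset.mem_filter.mp hi₀).1
    have hj₀c : g.coeff j₀ ≠ 0 := mem_support_iff.mp (Finset.mem_filter.mp hj₀).1
    have hi₀v : w.v (f.coeff i₀) = w.gauss f := (Finset.mem_filter.mp hi₀).2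
    have hj₀v : w.v (g.coeff j₀) = w.gauss g := (Finset.mem_filter.mp hj₀).2
    have key : (∑ x ∈ Finset.HasAntidiagonal.antidiagonal (i₀ + j₀), f.coeff x.1 * g.coeff x.2) ≠ 0 ∧
        w.v (∑ x ∈ Finset.HasAntidiagonal.antidiagonal (i₀ + j₀), f.coeff x.1 * g.coeff x.2)
          = w.v (f.coeff i₀ * g.coeff j₀) := by
      refine gen_sum_strict w.v w.add_ge (fun x hx => w.v_neg hx)
        (i₀ := ((i₀ : ℕ), (j₀ : ℕ))) (Finset.HasAntidiagonal.mem_antidiagonal.mpr rfl)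
        (mul_ne_zero hi₀c hj₀c) ?_
      rintro ⟨i, j⟩ hmem hne hne0
      have hij : i + j = i₀ + j₀ := Finset.HasAntidiagonal.mem_antidiagonal.mp hmem
      have hfi : f.coeff i ≠ 0 := left_ne_zero_of_mul hne0
      have hgj : g.coeff j ≠ 0 := right_ne_zero_of_mul hne0
      rw [w.map_mul _ _ hfi hgj, w.map_mul _ _ hi₀c hj₀c, hi₀v, hj₀v]
      have hine : i ≠ i₀ := by
        intro hie
        apply hne
        have : j = j₀ := by omega
        simp [hie, this]
      rcases lt_or_gt_of_ne hine with hlt | hgt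
      · have h1 : w.gauss f < w.v (f.coeff i) := by
          rcases (w.gauss_le_coeff hf hfi).lt_or_eq with h | h
          · exact h
          · exfalso
            have : i ∈ F := Finset.mem_filter.mpr ⟨mem_support_iff.mpr hfi, h.symm⟩
            exact absurd (F.min'_le i this) (not_le.mpr hlt)
        have h2 : w.gauss g ≤ w.v (g.coeff j) := w.gauss_le_coeff hg hgj
        linarith
      · have hjlt : j < j₀ := by omega
        have h1 : w.gauss g < w.v (g.coeff j) := by
          rcases (w.gauss_le_coeff hg hgj).lt_or_eq with h | h
          · exact h
          · exfalso
            have : j ∈ G := Finset.mem_filter.mpr ⟨mem_support_iff.mpr hgj, h.symm⟩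
            exact absurd (G.min'_le j this) (not_le.mpr hjlt)
        have h2 : w.gauss f ≤ w.v (f.coeff i) := w.gauss_le_coeff hf hfi
        linarith
    have hcoeff : (f * g).coeff (i₀ + j₀) ≠ 0 := by rw [coeff_mul]; exact key.1
    calc w.gauss (f * g) ≤ w.v ((f * g).coeff (i₀ + j₀)) := w.gauss_le_coeff hfg hcoeff
      _ = w.v (f.coeff i₀ * g.coeff j₀) := by rw [coeff_mul]; exact key.2
      _ = w.gauss f + w.gauss g := by rw [w.map_mul _ _ hi₀c hj₀c, hi₀v, hj₀v]
  · refine w.le_gauss hfg fun n hn => ?_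
    rw [coeff_mul] at hn ⊢
    refine gen_sum_ge w.v w.add_ge ?_ hn
    rintro ⟨i, j⟩ _ hne0
    rw [w.map_mul _ _ (left_ne_zero_of_mul hne0) (right_ne_zero_of_mul hne0)]
    exact add_le_add (w.gauss_le_coeff hf (left_ne_zero_of_mul hne0))
      (w.gauss_le_coeff hg (right_ne_zero_of_mul hne0))

theorem gauss_one : w.gauss 1 = 0 := by
  have : (1 : K[X]) = C 1 := by simp
  rw [this, w.gauss_C one_ne_zero, w.map_one]

theorem gauss_pow {f : K[X]} (hf : f ≠ 0) (n : ℕ) :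
    w.gauss (f ^ n) = n * w.gauss f := by
  induction n with
  | zero => simp [w.gauss_one]
  | succ n ih =>
    rw [pow_succ, w.gauss_mul (pow_ne_zero n hf) hf, ih]
    push_cast; ring

theorem v_nat_nonneg [CharZero K] (n : ℕ) (hn : n ≠ 0) : 0 ≤ w.v (n : K) := by
  induction n with
  | zero => exact absurd rfl hn
  | succ n ih =>
    by_cases h0 : n = 0
    · subst h0; simp [w.map_one]
    · have h1 : ((n : K) : K) ≠ 0 := Nat.cast_ne_zero.mpr h0
      have h2 : ((n + 1 : ℕ) : K) ≠ 0 := Nat.cast_ne_zero.mpr (by omega)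
      have h3 : ((n : K) + 1) ≠ 0 := by push_cast at h2 ⊢; exact h2
      have := w.add_ge (n : K) 1 h1 one_ne_zero h3
      rw [w.map_one] at this
      have h4 : ((n + 1 : ℕ) : K) = (n : K) + 1 := by push_cast; ring
      rw [h4]
      exact le_trans (le_min (ih h0) le_rfl) this

end AddVal

/-- Gauss valuation valued in `ℚ ∪ {∞}`, taking the value `⊤` at the zero polynomial. -/
noncomputable def AddVal.gaussT (w : AddVal K) (h : K[X]) : WithTop ℚ :=
  if h = 0 then ⊤ else (w.gauss h : WithTop ℚ)

/-- The quantity `t = v(ρ) - v(h) ∈ ℚ ∪ {∞}` attached to a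
part-`p`-th-power decomposition `h = q^p + ρ` (it is `⊤` when `ρ = 0`). -/
noncomputable def AddVal.tdiff (w : AddVal K) (h ρ : K[X]) : WithTop ℚ :=
  if ρ = 0 then ⊤ else ((w.gauss ρ - w.gauss h : ℚ) : WithTop ℚ)

/-- `h = q ^ p + ρ` is a part-`p`-th-power decomposition (`deg q ≤ ⌊deg h / p⌋`). -/
def IsPartDecomp (p : ℕ) (h q ρ : K[X]) : Prop :=
  h = q ^ p + ρ ∧ q.natDegree ≤ h.natDegree / p

/-- The threshold `p·v(p)/(p-1)`. -/
noncomputable def pBound (w : AddVal K) (p : ℕ) : ℚ :=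
  (p : ℚ) * w.v (p : K) / ((p : ℚ) - 1)

/-- A part-`p`-th-power decomposition is good if `t ≥ p·v(p)/(p-1)` or if no
decomposition achieves a strictly larger value of `t = v(ρ) - v(h)`. -/
def IsGoodDecomp (w : AddVal K) (p : ℕ) (h q ρ : K[X]) : Prop :=
  IsPartDecomp p h q ρ ∧
    (((pBound w p : ℚ) : WithTop ℚ) ≤ w.tdiff h ρ ∨
      ∀ q₁ ρ₁ : K[X], IsPartDecomp p h q₁ ρ₁ → w.tdiff h ρ₁ ≤ w.tdiff h ρ)

set_option maxHeartbeats 1000000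

/-- given two part-`p`-th-power decompositions `h = q^p + ρ = q₁^p + ρ₁`
with `0 ≤ v(ρ) - v(h) < p·v(p)/(p-1)` and `v(ρ₁) > v(ρ)`, one has
`v(q₁ - q) = v(ρ)/p`, i.e. `v((q₁ - q)^p) = v(ρ)`. -/
theorem statement2 {K : Type*} [Field K] [CharZero K] (w : AddVal K) (p : ℕ) (hp : p.Prime)
    (ζ : K) (hζ : IsPrimitiveRoot ζ p)
    (h q ρ q₁ ρ₁ : K[X]) (hh : h ≠ 0) (hρ : ρ ≠ 0)
    (hd : IsPartDecomp p h q ρ) (hd₁ : IsPartDecomp p h q₁ ρ₁)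
    (ht0 : 0 ≤ w.gauss ρ - w.gauss h)
    (ht1 : w.gauss ρ - w.gauss h < pBound w p)
    (hρ₁ : w.tdiff h ρ < w.tdiff h ρ₁) :
    w.gauss (q₁ - q) = w.gauss ρ / (p : ℚ) ∧ w.gauss ((q₁ - q) ^ p) = w.gauss ρ := by
  obtain ⟨hde, -⟩ := hd
  obtain ⟨hde₁, -⟩ := hd₁
  set P : ℚ := (p : ℚ) with hPdef
  have hP1 : (1 : ℚ) < P := by
    rw [hPdef]; exact_mod_cast hp.one_lt
  have hPpos : (0 : ℚ) < P := by linarith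
  have hd1 : (0 : ℚ) < P - 1 := by linarith
  set vh := w.gauss h with hvhdef
  set vρ := w.gauss ρ with hvρdef
  set vp := w.v ((p : ℕ) : K) with hvpdef
  have hpK : ((p : ℕ) : K) ≠ 0 := Nat.cast_ne_zero.mpr hp.ne_zero
  have hvp0 : 0 ≤ vp := w.v_nat_nonneg p hp.ne_zero
  have hpb : pBound w p = P * vp / (P - 1) := rfl
  have hvp : 0 < vp := by
    have h1 : (0 : ℚ) < P * vp / (P - 1) := by rw [← hpb]; exact lt_of_le_of_lt ht0 ht1
    rcases div_pos_iff.mp h1 with ⟨h2, -⟩ | ⟨-, h3⟩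
    · nlinarith
    · linarith
  set d := q₁ - q with hdd
  have hdne : d ≠ 0 := by
    intro h0
    have hq : q₁ = q := sub_eq_zero.mp h0
    have heq : q ^ p + ρ = q ^ p + ρ₁ := by rw [← hde, hde₁, hq]
    have hρe : ρ₁ = ρ := (add_left_cancel heq).symm
    rw [hρe] at hρ₁
    exact lt_irrefl _ hρ₁
  -- the difference S = ρ - ρ₁
  have hS : ρ - ρ₁ ≠ 0 ∧ w.gauss (ρ - ρ₁) = vρ := by
    by_cases h0 : ρ₁ = 0
    · subst h0; rw [sub_zero]; exact ⟨hρ, rfl⟩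
    · have hlt : vρ < w.gauss ρ₁ := by
        simp only [AddVal.tdiff, if_neg hρ, if_neg h0] at hρ₁
        have := WithTop.coe_lt_coe.mp hρ₁
        linarith
      have hlt' : w.gauss ρ < w.gauss (-ρ₁) := by rw [w.gauss_neg h0]; exact hlt
      have := gen_add_eq w.gauss w.gauss_add_ge (fun x hx => w.gauss_neg hx)
        hρ (neg_ne_zero.mpr h0) hlt'
      rw [← sub_eq_add_neg] at this
      exact this
  -- binomial expansion
  set T : ℕ → K[X] := fun k => q ^ k * d ^ (p - k) * ((p.choose k : ℕ) : K[X]) with hTdef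
  have hSeq : ρ - ρ₁ = ∑ k ∈ Finset.range p, T k := by
    have h1 : q₁ = q + d := by rw [hdd]; ring
    have h2 : q₁ ^ p = ∑ k ∈ Finset.range (p + 1), T k := by
      rw [h1, add_pow]
    have h3 : ρ - ρ₁ = q₁ ^ p - q ^ p := by
      have heq : q ^ p + ρ = q₁ ^ p + ρ₁ := by rw [← hde, hde₁]
      linear_combination heq
    rw [h3, h2, Finset.sum_range_succ]
    have h4 : T p = q ^ p := by
      simp [hTdef, Nat.sub_self, Nat.choose_self]
    rw [h4]; ring
  set a := w.gauss d with hadef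
  have hvpch : ∀ k : ℕ, 1 ≤ k → k < p → vp ≤ w.v ((p.choose k : ℕ) : K) := by
    intro k h1 h2
    obtain ⟨m, hm⟩ := hp.dvd_choose_self (by omega) h2
    have hm0 : m ≠ 0 := by
      intro h0; rw [h0, mul_zero] at hm
      exact absurd hm (Nat.choose_pos (le_of_lt h2)).ne'
    have hcast : ((p.choose k : ℕ) : K) = ((p : ℕ) : K) * ((m : ℕ) : K) := by
      rw [hm]; push_cast; ring
    rw [hcast, w.map_mul _ _ hpK (Nat.cast_ne_zero.mpr hm0)]
    have := w.v_nat_nonneg m hm0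
    linarith
  by_cases hq : q = 0
  · -- q = 0 : S = d ^ p
    have hS' : ρ - ρ₁ = d ^ p := by
      rw [hSeq, Finset.sum_eq_single 0]
      · simp [hTdef, hq]
      · intro k hk hkne
        simp [hTdef, hq, zero_pow hkne]
      · intro hmem; exact absurd (Finset.mem_range.mpr hp.pos) hmem
    have h1 : w.gauss (d ^ p) = vρ := by rw [← hS']; exact hS.2
    have h2 : P * a = vρ := by
      rw [w.gauss_pow hdne] at h1; rw [← h1, hPdef]
    refine ⟨?_, h1⟩
    rw [eq_div_iff (by positivity : P ≠ 0)]
    linarith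
  · -- q ≠ 0
    set b := w.gauss q with hbdef
    have hTg : ∀ k : ℕ, k < p → T k ≠ 0 ∧
        w.gauss (T k) = (k : ℚ) * b + (P - k) * a + w.v ((p.choose k : ℕ) : K) := by
      intro k hk
      have hch : (p.choose k : ℕ) ≠ 0 := (Nat.choose_pos (le_of_lt hk)).ne'
      have hchK : ((p.choose k : ℕ) : K) ≠ 0 := Nat.cast_ne_zero.mpr hch
      have hchX : ((p.choose k : ℕ) : K[X]) ≠ 0 := by
        rw [← Polynomial.C_eq_natCast]; simpa using hchK
      have hqk : q ^ k ≠ 0 := pow_ne_zero _ hq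
      have hdk : d ^ (p - k) ≠ 0 := pow_ne_zero _ hdne
      have hne : T k ≠ 0 := mul_ne_zero (mul_ne_zero hqk hdk) hchX
      refine ⟨hne, ?_⟩
      have e1 : w.gauss (T k) = w.gauss (q ^ k * d ^ (p - k))
          + w.gauss (((p.choose k : ℕ) : K[X])) :=
        w.gauss_mul (mul_ne_zero hqk hdk) hchX
      have e2 : w.gauss (((p.choose k : ℕ) : K[X])) = w.v ((p.choose k : ℕ) : K) := by
        rw [← Polynomial.C_eq_natCast, w.gauss_C hchK]
      have e3 : w.gauss (q ^ k * d ^ (p - k)) = (k : ℚ) * b + (P - k) * a := by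
        rw [w.gauss_mul hqk hdk, w.gauss_pow hq, w.gauss_pow hdne]
        have hc : ((p - k : ℕ) : ℚ) = P - k := by
          rw [hPdef]; exact_mod_cast Nat.cast_sub (le_of_lt hk)
        rw [hc]
      rw [e1, e2, e3]
    have hT0 : w.gauss (T 0) = P * a := by
      rcases hTg 0 hp.pos with ⟨-, he⟩
      rw [he]
      simp [w.map_one]
    have hT0ne : T 0 ≠ 0 := (hTg 0 hp.pos).1
    have hvq : vh ≤ P * b := by
      have hqp : q ^ p = h + (-ρ) := by rw [hde]; ring
      have hne : h + (-ρ) ≠ 0 := by rw [← hqp]; exact pow_ne_zero _ hq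
      have hmin := w.gauss_add_ge h (-ρ) hh (neg_ne_zero.mpr hρ) hne
      rw [← hqp, w.gauss_pow hq, w.gauss_neg hρ] at hmin
      have hmm : min vh vρ = vh := min_eq_left (by linarith)
      rw [hmm] at hmin
      rw [hPdef]; exact hmin
    have ht1' : vρ - vh < P * vp / (P - 1) := by rw [← hpb]; exact ht1
    -- Claim A : vρ ≤ P * a
    have hA : vρ ≤ P * a := by
      by_contra hcon
      push_neg at hcon
      have hstrict : ∀ k ∈ Finset.range p, k ≠ 0 → T k ≠ 0 →
          w.gauss (T 0) < w.gauss (T k) := by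
        intro k hk hkne _
        have hkp : k < p := Finset.mem_range.mp hk
        rw [hT0, (hTg k hkp).2]
        have hk0 : (1 : ℚ) ≤ (k : ℚ) := by exact_mod_cast Nat.one_le_iff_ne_zero.mpr hkne
        have hkP : (k : ℚ) + 1 ≤ P := by rw [hPdef]; exact_mod_cast Nat.succ_le_of_lt hkp
        have hck := hvpch k (Nat.one_le_iff_ne_zero.mpr hkne) hkp
        have hfactA : P * (a - b) < P * vp / (P - 1) := by linarith
        have h2A : (P * (a - b)) * (P - 1) < P * vp := (lt_div_iff₀ hd1).mp hfactA
        have hab2 : (a - b) * (P - 1) < vp := by nlinarith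
        have hgoalA : (k : ℚ) * (a - b) < vp := by
          rcases le_or_gt (a - b) 0 with hle | hgt
          · nlinarith
          · nlinarith
        nlinarith [hgoalA, hck]
      have key := gen_sum_strict w.gauss w.gauss_add_ge (fun x hx => w.gauss_neg hx)
        (Finset.mem_range.mpr hp.pos) hT0ne hstrict
      rw [← hSeq] at key
      rw [key.2, hT0] at hS
      linarith [hS.2]
    -- Claim B : P * a ≤ vρ
    have hB : P * a ≤ vρ := by
      by_contra hcon
      push_neg at hcon
      have hstrict : ∀ k ∈ Finset.range p, T k ≠ 0 → vρ < w.gauss (T k) := by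
        intro k hk _
        have hkp : k < p := Finset.mem_range.mp hk
        rcases Nat.eq_zero_or_pos k with h0 | h0
        · subst h0; rw [hT0]; exact hcon
        · rw [(hTg k hkp).2]
          have hk0 : (1 : ℚ) ≤ (k : ℚ) := by exact_mod_cast h0
          have hkP : (k : ℚ) + 1 ≤ P := by rw [hPdef]; exact_mod_cast Nat.succ_le_of_lt hkp
          set ck := w.v ((p.choose k : ℕ) : K) with hckdef
          have hck : vp ≤ ck := hvpch k h0 hkp
          have hfact : vρ - P * b < P * vp / (P - 1) := by linarith
          have h2 : (vρ - P * b) * (P - 1) < P * vp := (lt_div_iff₀ hd1).mp hfact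
          have hmain : (k : ℚ) * (vρ - P * b) < P * vp := by
            rcases le_or_gt (vρ - P * b) 0 with hle | hgt
            · nlinarith
            · nlinarith
          have hPk : (0 : ℚ) < P - k := by linarith
          have hA1 : (P - k) * vρ < (P - k) * (P * a) := by nlinarith
          have hckP : P * vp ≤ P * ck := by nlinarith
          have hsum : P * vρ < P * ((k : ℚ) * b + (P - k) * a + ck) := by nlinarith
          exact (mul_lt_mul_iff_right₀ hPpos).mp hsum
      have key := gen_sum_gt w.gauss w.gauss_add_ge hstrict (by rw [← hSeq]; exact hS.1)
      rw [← hSeq, hS.2] at key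
      exact lt_irrefl _ key
    have hPa : P * a = vρ := le_antisymm hB hA
    constructor
    · rw [eq_div_iff (by positivity : (p:ℚ) ≠ 0)]
      linarith [hPa, hPdef]
    · rw [w.gauss_pow hdne]
      linarith [hPa, hPdef]
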